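/- arXiv:2104.10877 — 2 statements merged into one kernel-verified Lean document; each statement's English description precedes it below -/
import Mathlib

section
/- Let σ > 0 and τ ∈ (0,1]. If y ≥ 2σ², then (1/(√(2π)·σ·√τ))·exp{−(y/2 − σ²τ/2)²/(2σ²τ)} ≤ 8√τ/(√(2π)·σ³·e). -/
theorem gaussian_density_bound_itm (σ τ y : ℝ) (hσ : 0 < σ) (hτ : τ ∈ Set.Ioc (0 : ℝ) 1)
    (hy : 2 * σ ^ 2 ≤ y) :
    (1 / (Real.sqrt (2 * Real.pi) * σ * Real.sqrt τ)) *
        Real.exp (-(y / 2 - σ ^ 2 * τ / 2) ^ 2 / (2 * σ ^ 2 * τ)) ≤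
      8 * Real.sqrt τ / (Real.sqrt (2 * Real.pi) * σ ^ 3 * Real.exp 1) := by
  obtain ⟨hτ0, hτ1⟩ := hτ
  have hst : 0 < Real.sqrt τ := Real.sqrt_pos.mpr hτ0
  have h2π : 0 < Real.sqrt (2 * Real.pi) := Real.sqrt_pos.mpr (by positivity)
  have hA : σ ^ 2 / 2 ≤ y / 2 - σ ^ 2 * τ / 2 := by nlinarith [sq_nonneg σ]
  set u := σ ^ 2 / (8 * τ) with hu_def
  have hu : 0 < u := by positivity
  have hexp1 : Real.exp (-(y / 2 - σ ^ 2 * τ / 2) ^ 2 / (2 * σ ^ 2 * τ)) ≤ Real.exp (-u) := by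
    apply Real.exp_le_exp.mpr
    rw [neg_div, neg_le_neg_iff, hu_def, div_le_div_iff₀ (by positivity) (by positivity)]
    have hA2 : σ ^ 4 / 4 ≤ (y / 2 - σ ^ 2 * τ / 2) ^ 2 := by
      nlinarith [sq_nonneg (y / 2 - σ ^ 2 * τ / 2 - σ ^ 2 / 2),
        mul_le_mul_of_nonneg_left hA (sq_nonneg σ)]
    nlinarith [mul_le_mul_of_nonneg_right hA2 hτ0.le]
  have hexp2 : Real.exp (-u) ≤ 8 * τ / (σ ^ 2 * Real.exp 1) := by
    have h1 : u ≤ Real.exp (u - 1) := by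
      have := Real.add_one_le_exp (u - 1)
      linarith
    have h2 : u * Real.exp 1 ≤ Real.exp u := by
      have := Real.exp_sub u 1
      rw [this] at h1
      rw [div_eq_mul_inv] at h1
      have := Real.exp_pos 1
      calc u * Real.exp 1 ≤ Real.exp u * (Real.exp 1)⁻¹ * Real.exp 1 := by
            apply mul_le_mul_of_nonneg_right h1 (Real.exp_pos 1).le
        _ = Real.exp u := by field_simp
    have h3 : Real.exp (-u) * (u * Real.exp 1) ≤ 1 := by
      calc Real.exp (-u) * (u * Real.exp 1) ≤ Real.exp (-u) * Real.exp u := by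
            apply mul_le_mul_of_nonneg_left h2 (Real.exp_pos _).le
        _ = 1 := by rw [← Real.exp_add]; simp
    have huτ : u = σ ^ 2 / (8 * τ) := rfl
    rw [le_div_iff₀ (by positivity)]
    calc Real.exp (-u) * (σ ^ 2 * Real.exp 1) = Real.exp (-u) * (u * Real.exp 1) * (8 * τ) := by
          rw [huτ]; field_simp
      _ ≤ 1 * (8 * τ) := by apply mul_le_mul_of_nonneg_right h3 (by positivity)
      _ = 8 * τ := by ring
  have hC : 0 < 1 / (Real.sqrt (2 * Real.pi) * σ * Real.sqrt τ) := by positivity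
  calc (1 / (Real.sqrt (2 * Real.pi) * σ * Real.sqrt τ)) *
        Real.exp (-(y / 2 - σ ^ 2 * τ / 2) ^ 2 / (2 * σ ^ 2 * τ))
      ≤ (1 / (Real.sqrt (2 * Real.pi) * σ * Real.sqrt τ)) * (8 * τ / (σ ^ 2 * Real.exp 1)) := by
        apply mul_le_mul_of_nonneg_left (le_trans hexp1 hexp2) hC.le
    _ = 8 * Real.sqrt τ / (Real.sqrt (2 * Real.pi) * σ ^ 3 * Real.exp 1) := by
        have hττ : Real.sqrt τ * Real.sqrt τ = τ := Real.mul_self_sqrt hτ0.le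
        rw [← hττ]
        have h0 : Real.sqrt τ ≠ 0 := ne_of_gt hst
        field_simp
        simp only [Real.sqrt_sq hst.le, Real.sqrt_mul_self hst.le]
end

section
/- Let Φ be the standard normal CDF and φ its density, and let σ > 0, τ > 0, ρ < 0. For d ∈ ℝ and z > 0 set d_{ρz} := d + ρz/(σ√τ). Then for any a ∈ ℝ, |∫_0^{a} [(Φ(d⁺) − Φ(d⁺_{ρz})) − (Φ(d⁻) − Φ(d⁻_{ρz}))] ν(dz)| ≤ (|ρ|/√(2πe))·∫_0^∞ z ν(dz), whenever d⁺ − d⁻ = σ√τ and ν is a measure on (0,∞) with ∫_0^∞ z ν(dz) < ∞. -/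
open MeasureTheory


private lemma gauss_hasDeriv (u : ℝ) :
    HasDerivAt (fun u : ℝ => (1 / Real.sqrt (2 * Real.pi)) * Real.exp (-u ^ 2 / 2))
      ((1 / Real.sqrt (2 * Real.pi)) * (Real.exp (-u ^ 2 / 2) * (-u))) u := by
  have h1 : HasDerivAt (fun u : ℝ => -u ^ 2 / 2) (-u) u := by
    have : HasDerivAt (fun x : ℝ => -x ^ 2 / 2) (-(((2:ℕ):ℝ) * u ^ (2 - 1)) / 2) u :=
      ((hasDerivAt_pow 2 u).neg.div_const 2)
    convert this using 1
    ring
  exact (h1.exp).const_mul _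

private lemma gauss_deriv_bound (u : ℝ) :
    |(1 / Real.sqrt (2 * Real.pi)) * (Real.exp (-u ^ 2 / 2) * (-u))|
      ≤ 1 / Real.sqrt (2 * Real.pi * Real.exp 1) := by
  have h2π : (0:ℝ) < Real.sqrt (2 * Real.pi) := Real.sqrt_pos.2 (by positivity)
  have habs : |u| ≤ (u ^ 2 + 1) / 2 := by nlinarith [sq_nonneg (|u| - 1), sq_abs u]
  have he : (u ^ 2 - 1) / 2 + 1 ≤ Real.exp ((u ^ 2 - 1) / 2) := Real.add_one_le_exp _
  have hkey : Real.exp (-u ^ 2 / 2) * |u| ≤ Real.exp (-(1:ℝ) / 2) := by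
    have h1 : |u| ≤ Real.exp ((u ^ 2 - 1) / 2) := by linarith
    calc Real.exp (-u ^ 2 / 2) * |u| ≤ Real.exp (-u ^ 2 / 2) * Real.exp ((u ^ 2 - 1) / 2) :=
          mul_le_mul_of_nonneg_left h1 (Real.exp_nonneg _)
      _ = Real.exp (-(1:ℝ) / 2) := by rw [← Real.exp_add]; ring_nf
  have hsq : Real.sqrt (2 * Real.pi * Real.exp 1) = Real.sqrt (2 * Real.pi) * Real.sqrt (Real.exp 1) :=
    Real.sqrt_mul (by positivity) _
  have hexp : Real.exp (-(1:ℝ) / 2) = 1 / Real.sqrt (Real.exp 1) := by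
    rw [← Real.exp_half, one_div, ← Real.exp_neg]
    norm_num
  rw [abs_mul, abs_mul, abs_neg, abs_of_nonneg (Real.exp_nonneg _),
    abs_of_nonneg (by positivity : (0:ℝ) ≤ 1 / Real.sqrt (2 * Real.pi)), hsq, div_mul_eq_div_div]
  calc 1 / Real.sqrt (2 * Real.pi) * (Real.exp (-u ^ 2 / 2) * |u|)
      ≤ 1 / Real.sqrt (2 * Real.pi) * Real.exp (-(1:ℝ) / 2) :=
        mul_le_mul_of_nonneg_left hkey (by positivity)
    _ = 1 / Real.sqrt (2 * Real.pi) / Real.sqrt (Real.exp 1) := by rw [hexp]; ring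

private lemma gauss_lipschitz (x y : ℝ) :
    |(1 / Real.sqrt (2 * Real.pi)) * Real.exp (-x ^ 2 / 2)
      - (1 / Real.sqrt (2 * Real.pi)) * Real.exp (-y ^ 2 / 2)|
      ≤ (1 / Real.sqrt (2 * Real.pi * Real.exp 1)) * |x - y| := by
  have := Convex.norm_image_sub_le_of_norm_deriv_le
    (f := fun u : ℝ => (1 / Real.sqrt (2 * Real.pi)) * Real.exp (-u ^ 2 / 2))
    (s := Set.univ) (C := 1 / Real.sqrt (2 * Real.pi * Real.exp 1))
    (fun u _ => (gauss_hasDeriv u).differentiableAt)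
    (fun u _ => by rw [(gauss_hasDeriv u).deriv]; exact gauss_deriv_bound u)
    convex_univ (Set.mem_univ y) (Set.mem_univ x)
  simpa [Real.norm_eq_abs, abs_sub_comm] using this


private lemma incr_bound (φ Φ : ℝ → ℝ)
    (hφ : ∀ u : ℝ, φ u = (1 / Real.sqrt (2 * Real.pi)) * Real.exp (-u ^ 2 / 2))
    (hΦ : ∀ y : ℝ, Φ y = ∫ u in Set.Iic y, φ u)
    (hφint : Integrable φ) (dm dp c : ℝ) :
    |(Φ dp - Φ (dp + c)) - (Φ dm - Φ (dm + c))|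
      ≤ (1 / Real.sqrt (2 * Real.pi * Real.exp 1)) * |c| * |dp - dm| := by
  have hΦsub : ∀ x y : ℝ, Φ x - Φ y = ∫ u in y..x, φ u := fun x y => by
    rw [hΦ x, hΦ y]
    exact intervalIntegral.integral_Iic_sub_Iic hφint.integrableOn hφint.integrableOn
  have hi1 : IntervalIntegrable φ volume dm dp := hφint.intervalIntegrable
  have hi2 : IntervalIntegrable (fun u => φ (u + c)) volume dm dp := by
    have := (hφint.intervalIntegrable (a := dm + c) (b := dp + c)).comp_add_right c
    simpa using this
  have e1 : ∫ u in dm..dp, φ (u + c) = ∫ u in (dm + c)..(dp + c), φ u :=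
    intervalIntegral.integral_comp_add_right φ c
  have e2 : ∫ u in dm..dp, (φ u - φ (u + c))
      = (∫ u in dm..dp, φ u) - ∫ u in dm..dp, φ (u + c) :=
    intervalIntegral.integral_sub hi1 hi2
  have hrw : (Φ dp - Φ (dp + c)) - (Φ dm - Φ (dm + c))
      = ∫ u in dm..dp, (φ u - φ (u + c)) := by
    rw [e2, e1, ← hΦsub dp dm, ← hΦsub (dp + c) (dm + c)]
    ring
  rw [hrw]
  have hbd : ∀ u ∈ Set.uIoc dm dp, ‖φ u - φ (u + c)‖
      ≤ 1 / Real.sqrt (2 * Real.pi * Real.exp 1) * |c| := by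
    intro u _
    have h := gauss_lipschitz u (u + c)
    rw [Real.norm_eq_abs, hφ u, hφ (u + c)]
    simpa using h
  have := intervalIntegral.norm_integral_le_of_norm_le_const hbd
  rw [Real.norm_eq_abs] at this
  simpa [abs_sub_comm dp dm] using this

/-- Bound on the integrated difference of normal CDF increments appearing in the
evaluation of the residual terms: if `d⁺ = d⁻ + σ√τ` and `ν` is a measure on
`(0,∞)` with a finite first moment, then
`|∫_0^a [(Φ(d⁺) − Φ(d⁺_{ρz})) − (Φ(d⁻) − Φ(d⁻_{ρz}))] ν(dz)|
  ≤ (|ρ|/√(2πe)) ∫_0^∞ z ν(dz)`,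
where `d_{ρz} = d + ρz/(σ√τ)`. -/
theorem cdf_increment_integral_bound (σ τ ρ : ℝ) (hσ : 0 < σ) (hτ : 0 < τ) (hρ : ρ < 0)
    (φ Φ : ℝ → ℝ)
    (hφ : ∀ u : ℝ, φ u = (1 / Real.sqrt (2 * Real.pi)) * Real.exp (-u ^ 2 / 2))
    (hΦ : ∀ y : ℝ, Φ y = ∫ u in Set.Iic y, φ u)
    (dp dm : ℝ) (hd : dp = dm + σ * Real.sqrt τ)
    (ν : Measure ℝ) (hνfin : Integrable (fun z : ℝ => z) (ν.restrict (Set.Ioi 0))) :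
    ∀ a : ℝ,
      |∫ z in Set.Ioc (0 : ℝ) a,
          ((Φ dp - Φ (dp + ρ * z / (σ * Real.sqrt τ)))
            - (Φ dm - Φ (dm + ρ * z / (σ * Real.sqrt τ)))) ∂ν| ≤
        (|ρ| / Real.sqrt (2 * Real.pi * Real.exp 1)) * ∫ z in Set.Ioi (0 : ℝ), z ∂ν := by
  intro a
  have hstpos : 0 < σ * Real.sqrt τ := by positivity
  have hCpos : (0:ℝ) ≤ |ρ| / Real.sqrt (2 * Real.pi * Real.exp 1) := by positivity
  have hφint : Integrable φ := by
    have h0 : Integrable (fun x : ℝ => Real.exp (-(1/2 : ℝ) * x ^ 2)) :=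
      integrable_exp_neg_mul_sq (by norm_num)
    have := h0.const_mul (1 / Real.sqrt (2 * Real.pi))
    refine this.congr (Filter.Eventually.of_forall fun u => ?_)
    rw [hφ]
    ring_nf
  have key : ∀ z : ℝ, 0 < z →
      |(Φ dp - Φ (dp + ρ * z / (σ * Real.sqrt τ)))
        - (Φ dm - Φ (dm + ρ * z / (σ * Real.sqrt τ)))|
      ≤ (|ρ| / Real.sqrt (2 * Real.pi * Real.exp 1)) * z := by
    intro z hz
    have h := incr_bound φ Φ hφ hΦ hφint dm dp (ρ * z / (σ * Real.sqrt τ))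
    have h1 : |dp - dm| = σ * Real.sqrt τ := by rw [hd]; simp [abs_of_pos hstpos]
    have h2 : |ρ * z / (σ * Real.sqrt τ)| = |ρ| * z / (σ * Real.sqrt τ) := by
      rw [abs_div, abs_mul, abs_of_pos hz, abs_of_pos hstpos]
    rw [h1, h2] at h
    refine h.trans (le_of_eq ?_)
    field_simp
  have hsub : Set.Ioc (0:ℝ) a ⊆ Set.Ioi 0 := Set.Ioc_subset_Ioi_self
  have hbint : Integrable (fun z : ℝ => (|ρ| / Real.sqrt (2 * Real.pi * Real.exp 1)) * z)
      (ν.restrict (Set.Ioc 0 a)) :=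
    (MeasureTheory.IntegrableOn.mono_set hνfin hsub).const_mul _
  have step1 : |∫ z in Set.Ioc (0:ℝ) a,
      ((Φ dp - Φ (dp + ρ * z / (σ * Real.sqrt τ)))
        - (Φ dm - Φ (dm + ρ * z / (σ * Real.sqrt τ)))) ∂ν|
      ≤ ∫ z in Set.Ioc (0:ℝ) a, (|ρ| / Real.sqrt (2 * Real.pi * Real.exp 1)) * z ∂ν := by
    rw [← Real.norm_eq_abs]
    refine norm_integral_le_of_norm_le hbint ?_
    refine (ae_restrict_iff' measurableSet_Ioc).2 (Filter.Eventually.of_forall fun z hz => ?_)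
    rw [Real.norm_eq_abs]
    exact key z hz.1
  have step2 : ∫ z in Set.Ioc (0:ℝ) a, (|ρ| / Real.sqrt (2 * Real.pi * Real.exp 1)) * z ∂ν
      ≤ (|ρ| / Real.sqrt (2 * Real.pi * Real.exp 1)) * ∫ z in Set.Ioi (0:ℝ), z ∂ν := by
    rw [integral_const_mul]
    refine mul_le_mul_of_nonneg_left ?_ hCpos
    refine setIntegral_mono_set hνfin ?_ (HasSubset.Subset.eventuallyLE hsub)
    exact (ae_restrict_iff' measurableSet_Ioi).2 (Filter.Eventually.of_forall fun z hz => le_of_lt hz)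
  exact step1.trans step2
end
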